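/- Let f : (0,∞) → ℝ be convex and φ : ℝⁿ → [0,∞) a log-concave function (with sufficient smoothness and integrability; write φ = e^{−ψ}, ψ strictly convex C², ∇ψ a diffeomorphism onto ℝⁿ). Then ∫_{supp φ} φ f( e^{⟨∇φ/φ, x⟩} φ^{−2} det(Hess(−ln φ)) ) dx ≥ f( (∫ φ° dx)/(∫ φ dx) ) · ∫_{supp φ} φ dx. If f is concave the inequality is reversed. -/

import Mathlib

open Real MeasureTheory
open Set

noncomputable def detHess {n : ℕ} (ψ : EuclideanSpace ℝ (Fin n) → ℝ)
    (x : EuclideanSpace ℝ (Fin n)) : ℝ :=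
  LinearMap.det (fderiv ℝ (gradient ψ) x).toLinearMap

section Aux
variable {n : ℕ}
local notation "E" => EuclideanSpace ℝ (Fin n)

lemma gradC1 {ψ : E → ℝ} (hψ : ContDiff ℝ 2 ψ) : ContDiff ℝ 1 (gradient ψ) := by
  have h1 : ContDiff ℝ 1 (fderiv ℝ ψ) := hψ.fderiv_right (by norm_num)
  have : gradient ψ = fun x => (InnerProductSpace.toDual ℝ E).symm (fderiv ℝ ψ x) := rfl
  rw [this]
  exact (InnerProductSpace.toDual ℝ E).symm.toLinearIsometry.contDiff.comp h1


lemma inner_gradient {ψ : E → ℝ} (x v : E) :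
    (inner ℝ (gradient ψ x) v : ℝ) = fderiv ℝ ψ x v := by
  simp [gradient, InnerProductSpace.toDual_symm_apply]


lemma grad_ineq {ψ : E → ℝ} (hψ : ContDiff ℝ 2 ψ) (hc : ConvexOn ℝ univ ψ) (x z : E) :
    ψ x + (inner ℝ (gradient ψ x) (z - x) : ℝ) ≤ ψ z := by
  set u : ℝ → ℝ := fun t => ψ (x + t • (z - x)) with hu
  have hconv : ConvexOn ℝ univ u := by
    have := hc.comp_affineMap (AffineMap.lineMap x z : ℝ →ᵃ[ℝ] E)
    simp only [Set.preimage_univ] at this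
    have heq : u = ψ ∘ ⇑(AffineMap.lineMap x z : ℝ →ᵃ[ℝ] E) := ?_
    · rw [heq]; exact this
    funext t
    simp [u, AffineMap.lineMap_apply]
    congr 1
    module
  have hd : HasDerivAt u (fderiv ℝ ψ x (z - x)) 0 := by
    have hline : HasDerivAt (fun t : ℝ => x + t • (z - x)) (z - x) 0 := by
      simpa using ((hasDerivAt_id (0:ℝ)).smul_const (z - x)).const_add x
    have hψd : HasFDerivAt ψ (fderiv ℝ ψ x) (x + (0:ℝ) • (z - x)) := by
      simpa using ((hψ.differentiable (by norm_num)) _).hasFDerivAt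
    exact (hψd.comp_hasDerivAt 0 hline)
  have h01 : deriv u 0 ≤ slope u 0 1 :=
    hconv.deriv_le_slope (mem_univ _) (mem_univ _) one_pos hd.differentiableAt
  rw [hd.deriv] at h01
  rw [slope_def_field] at h01
  simp [u] at h01
  rw [inner_gradient, map_sub]
  linarith


lemma grad_mono {ψ : E → ℝ} (hψ : ContDiff ℝ 2 ψ) (hc : ConvexOn ℝ univ ψ) (x z : E) :
    0 ≤ (inner ℝ (gradient ψ z - gradient ψ x) (z - x) : ℝ) := by
  have h1 := grad_ineq hψ hc x z
  have h2 := grad_ineq hψ hc z x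
  have hxz : x - z = -(z - x) := by abel
  have : (inner ℝ (gradient ψ z) (x - z) : ℝ) = - inner ℝ (gradient ψ z) (z - x) := by
    rw [hxz, inner_neg_right]
  rw [inner_sub_left]
  rw [this] at h2
  linarith


lemma hess_psd {ψ : E → ℝ} (hψ : ContDiff ℝ 2 ψ) (hc : ConvexOn ℝ univ ψ) (x v : E) :
    0 ≤ (inner ℝ (fderiv ℝ (gradient ψ) x v) v : ℝ) := by
  have hdiff : DifferentiableAt ℝ (gradient ψ) x := ((gradC1 hψ).differentiable one_ne_zero) x
  set A := fderiv ℝ (gradient ψ) x with hA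
  have hline : ∀ t : ℝ, HasDerivAt (fun s : ℝ => x + s • v) v t := by
    intro t; simpa using ((hasDerivAt_id t).smul_const v).const_add x
  have hg : HasDerivAt (fun t : ℝ => gradient ψ (x + t • v)) (A v) 0 := by
    have hx0 : x + (0:ℝ) • v = x := by simp
    have hF : HasFDerivAt (gradient ψ) A (x + (0:ℝ) • v) := by
      rw [hx0]; exact hdiff.hasFDerivAt
    exact hF.comp_hasDerivAt 0 (hline 0)
  have hslope := hasDerivAt_iff_tendsto_slope.1 hg
  have hten : Filter.Tendsto (fun t : ℝ => (inner ℝ (slope (fun t : ℝ => gradient ψ (x + t • v)) 0 t) v : ℝ))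
      (nhdsWithin 0 {(0:ℝ)}ᶜ) (nhds (inner ℝ (A v) v : ℝ)) := by
    exact (Continuous.inner continuous_id continuous_const).continuousAt.tendsto.comp hslope
  refine ge_of_tendsto hten ?_
  filter_upwards [self_mem_nhdsWithin] with t ht
  have ht0 : t ≠ 0 := by simpa using ht
  have hmono := grad_mono hψ hc x (x + t • v)
  have hsub : x + t • v - x = t • v := by abel
  rw [hsub, inner_smul_right] at hmono
  rw [slope_def_module]
  simp only [inner_smul_left]
  have : (inner ℝ (gradient ψ (x + t • v) - gradient ψ (x + (0:ℝ) • v)) v : ℝ)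
      = inner ℝ (gradient ψ (x + t • v) - gradient ψ x) v := by norm_num
  rw [this]
  have h2 : 0 ≤ t * (inner ℝ (gradient ψ (x + t • v) - gradient ψ x) v : ℝ) := hmono
  have := mul_le_mul_of_nonneg_left h2 (le_of_lt (mul_self_pos.2 (inv_ne_zero ht0)))
  rw [mul_zero] at this
  calc (0:ℝ) ≤ t⁻¹ * t⁻¹ * (t * inner ℝ (gradient ψ (x + t • v) - gradient ψ x) v) := this
    _ = (starRingEnd ℝ) (t - 0)⁻¹ * inner ℝ (gradient ψ (x + t • v) - gradient ψ x) v := by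
        rw [sub_zero, conj_trivial]
        field_simp


lemma L_eval {ψ L : E → ℝ} (hψ : ContDiff ℝ 2 ψ) (hc : ConvexOn ℝ univ ψ)
    (hL : ∀ y, IsLUB (Set.range fun x => (inner ℝ x y : ℝ) - ψ x) (L y)) (x : E) :
    L (gradient ψ x) = (inner ℝ x (gradient ψ x) : ℝ) - ψ x := by
  have hgr : IsGreatest (Set.range fun z => (inner ℝ z (gradient ψ x) : ℝ) - ψ z)
      ((inner ℝ x (gradient ψ x) : ℝ) - ψ x) := by
    constructor
    · exact ⟨x, rfl⟩
    · rintro a ⟨z, rfl⟩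
      have h := grad_ineq hψ hc x z
      rw [inner_sub_right] at h
      have h2 : (inner ℝ (gradient ψ x) z : ℝ) = inner ℝ z (gradient ψ x) := real_inner_comm _ _
      have h3 : (inner ℝ (gradient ψ x) x : ℝ) = inner ℝ x (gradient ψ x) := real_inner_comm _ _
      simp only []
      linarith [h, h2, h3]
  exact (hL (gradient ψ x)).unique hgr.isLUB


lemma L_lb {ψ L : E → ℝ}
    (hL : ∀ y, IsLUB (Set.range fun x => (inner ℝ x y : ℝ) - ψ x) (L y)) (x y : E) :
    (inner ℝ x y : ℝ) - ψ x ≤ L y := (hL y).1 ⟨x, rfl⟩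


lemma gradL {ψ L : E → ℝ} (hψ : ContDiff ℝ 2 ψ) (hc : ConvexOn ℝ univ ψ)
    (hL : ∀ y, IsLUB (Set.range fun x => (inner ℝ x y : ℝ) - ψ x) (L y))
    (hLC2 : ContDiff ℝ 2 L) (x : E) :
    gradient L (gradient ψ x) = x := by
  set y₀ := gradient ψ x with hy₀
  have hmin : IsLocalMin (fun y => L y - (inner ℝ x y : ℝ)) y₀ := by
    have : ∀ y, L y₀ - (inner ℝ x y₀ : ℝ) ≤ L y - (inner ℝ x y : ℝ) := by
      intro y
      have h1 := L_lb hL x y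
      have h2 := L_eval hψ hc hL x
      have h3 : (inner ℝ x y₀ : ℝ) = inner ℝ x (gradient ψ x) := rfl
      linarith
    exact (isMinOn_univ_iff.2 this).isLocalMin Filter.univ_mem
  have hfd : fderiv ℝ (fun y => L y - (inner ℝ x y : ℝ)) y₀ = 0 := hmin.fderiv_eq_zero
  have hLd : DifferentiableAt ℝ L y₀ := (hLC2.differentiable (by norm_num)) y₀
  have hinner : HasFDerivAt (fun y : E => (inner ℝ x y : ℝ)) (innerSL ℝ x) y₀ :=
    (innerSL ℝ x).hasFDerivAt
  have : fderiv ℝ (fun y => L y - (inner ℝ x y : ℝ)) y₀ = fderiv ℝ L y₀ - innerSL ℝ x := by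
    rw [fderiv_fun_sub hLd hinner.differentiableAt, hinner.fderiv]
  rw [this] at hfd
  have hLd' : fderiv ℝ L y₀ = innerSL ℝ x := by
    rwa [sub_eq_zero] at hfd
  apply ext_inner_right ℝ
  intro v
  rw [inner_gradient, hLd']
  simp [real_inner_comm]


lemma hess_det_ne {ψ L : E → ℝ} (hψ : ContDiff ℝ 2 ψ) (hc : ConvexOn ℝ univ ψ)
    (hL : ∀ y, IsLUB (Set.range fun x => (inner ℝ x y : ℝ) - ψ x) (L y))
    (hLC2 : ContDiff ℝ 2 L) (x : E) :
    LinearMap.det (fderiv ℝ (gradient ψ) x).toLinearMap ≠ 0 := by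
  have hid : gradient L ∘ gradient ψ = id := by
    funext z; exact gradL hψ hc hL hLC2 z
  have hdψ : DifferentiableAt ℝ (gradient ψ) x := ((gradC1 hψ).differentiable one_ne_zero) x
  have hdL : DifferentiableAt ℝ (gradient L) (gradient ψ x) :=
    ((gradC1 hLC2).differentiable one_ne_zero) _
  have hcomp : (fderiv ℝ (gradient L) (gradient ψ x)).comp (fderiv ℝ (gradient ψ) x)
      = ContinuousLinearMap.id ℝ E := by
    rw [← fderiv_comp x hdL hdψ, hid, fderiv_id]
  have hdet : LinearMap.det (fderiv ℝ (gradient L) (gradient ψ x)).toLinearMap *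
      LinearMap.det (fderiv ℝ (gradient ψ) x).toLinearMap = 1 := by
    have h2 := congrArg (fun f : E →L[ℝ] E => LinearMap.det (f : E →ₗ[ℝ] E)) hcomp
    simpa [ContinuousLinearMap.coe_comp, LinearMap.det_comp] using h2
  intro h
  rw [h, mul_zero] at hdet
  exact zero_ne_one hdet


lemma det_ne_of_coercive {B : E →L[ℝ] E} {c : ℝ} (hc : 0 < c)
    (h : ∀ v : E, c * ‖v‖^2 ≤ (inner ℝ (B v) v : ℝ)) :
    LinearMap.det (B.toLinearMap) ≠ 0 := by
  intro hdet
  obtain ⟨v, hv, hv0⟩ := SetLike.exists_of_lt (LinearMap.bot_lt_ker_of_det_eq_zero hdet)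
  rw [LinearMap.mem_ker] at hv
  have h2 := h v
  rw [ContinuousLinearMap.coe_coe] at hv
  rw [hv] at h2
  simp only [inner_zero_left] at h2
  have hvn : (0:ℝ) < ‖v‖^2 := by
    have hvne : ‖v‖ ≠ 0 := norm_ne_zero_iff.2 (by simpa using hv0)
    positivity
  nlinarith


lemma det_pos_of_psd {A : E →L[ℝ] E} (hpsd : ∀ v : E, 0 ≤ (inner ℝ (A v) v : ℝ))
    (hne : LinearMap.det A.toLinearMap ≠ 0) :
    0 < LinearMap.det A.toLinearMap := by
  set M : ℝ → (E →L[ℝ] E) := fun t => (1 - t) • ContinuousLinearMap.id ℝ E + t • A with hM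
  set q : ℝ → ℝ := fun t => LinearMap.det (M t).toLinearMap with hq
  have hcont : Continuous q := by
    have h1 : Continuous M := by
      apply Continuous.add
      · exact ((continuous_const.sub continuous_id).smul continuous_const)
      · exact continuous_id.smul continuous_const
    have : Continuous fun f : E →L[ℝ] E => f.det := ContinuousLinearMap.continuous_det
    exact this.comp h1
  have hq0 : q 0 = 1 := by
    simp [hq, hM]
  have hq1 : q 1 = LinearMap.det A.toLinearMap := by
    simp [hq, hM]
  have hqne : ∀ t ∈ Icc (0:ℝ) 1, q t ≠ 0 := by
    intro t ht
    rcases eq_or_lt_of_le ht.2 with h1 | h1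
    · subst h1; rw [hq1] at *; simpa [hq, hM] using hne
    · have hcl : (0:ℝ) < 1 - t := by linarith
      apply det_ne_of_coercive hcl
      intro v
      have : (inner ℝ (M t v) v : ℝ) = (1 - t) * (inner ℝ v v : ℝ) + t * (inner ℝ (A v) v : ℝ) := by
        simp [hM, inner_smul_left, inner_add_left]
      rw [this, real_inner_self_eq_norm_sq]
      have := mul_nonneg ht.1 (hpsd v)
      nlinarith [sq_nonneg ‖v‖]
  by_contra hle
  push_neg at hle
  have hlt : LinearMap.det A.toLinearMap < 0 := lt_of_le_of_ne hle hne
  have : (0:ℝ) ∈ Icc (q 1) (q 0) := by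
    rw [hq0, hq1]; exact ⟨le_of_lt hlt, zero_le_one⟩
  obtain ⟨t, ht, hqt⟩ := intermediate_value_Icc' zero_le_one hcont.continuousOn this
  exact hqne t ht hqt


lemma hess_pos {ψ L : E → ℝ} (hψ : ContDiff ℝ 2 ψ) (hc : ConvexOn ℝ univ ψ)
    (hL : ∀ y, IsLUB (Set.range fun x => (inner ℝ x y : ℝ) - ψ x) (L y))
    (hLC2 : ContDiff ℝ 2 L) (x : E) :
    0 < LinearMap.det (fderiv ℝ (gradient ψ) x).toLinearMap := by
  exact det_pos_of_psd (fun v => hess_psd hψ hc x v) (hess_det_ne hψ hc hL hLC2 x)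


lemma cov_aux {ψ L : E → ℝ} (hψ : ContDiff ℝ 2 ψ)
    (hgradC1 : ContDiff ℝ 1 (gradient ψ))
    (hdiffeo : Function.Bijective (gradient ψ))
    (heval : ∀ x, L (gradient ψ x) = (inner ℝ x (gradient ψ x) : ℝ) - ψ x)
    (hpos : ∀ x, 0 < LinearMap.det (fderiv ℝ (gradient ψ) x).toLinearMap)
    (hintφo : Integrable (fun y => Real.exp (-(L y)))) :
    (∫ y, Real.exp (-(L y)))
      = (∫ x, Real.exp (ψ x - (inner ℝ x (gradient ψ x) : ℝ)) *
          LinearMap.det (fderiv ℝ (gradient ψ) x).toLinearMap) ∧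
    Integrable (fun x => Real.exp (ψ x - (inner ℝ x (gradient ψ x) : ℝ)) *
          LinearMap.det (fderiv ℝ (gradient ψ) x).toLinearMap) := by
  have hf' : ∀ x ∈ (univ : Set E), HasFDerivWithinAt (gradient ψ)
      (fderiv ℝ (gradient ψ) x) univ x := fun x _ =>
    (((hgradC1.differentiable one_ne_zero) x).hasFDerivAt).hasFDerivWithinAt
  have hinj : InjOn (gradient ψ) univ := hdiffeo.1.injOn
  have himg : (gradient ψ) '' univ = univ := by
    rw [image_univ]; exact hdiffeo.2.range_eq
  have habs : ∀ x : E, |(fderiv ℝ (gradient ψ) x).det| • Real.exp (-(L (gradient ψ x)))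
      = Real.exp (ψ x - (inner ℝ x (gradient ψ x) : ℝ)) *
        LinearMap.det (fderiv ℝ (gradient ψ) x).toLinearMap := by
    intro x
    have h1 : (fderiv ℝ (gradient ψ) x).det = LinearMap.det (fderiv ℝ (gradient ψ) x).toLinearMap := rfl
    rw [smul_eq_mul, h1, abs_of_pos (hpos x), heval x]
    rw [neg_sub]
    ring
  constructor
  · have := integral_image_eq_integral_abs_det_fderiv_smul volume MeasurableSet.univ hf' hinj
      (fun y => Real.exp (-(L y)))
    rw [himg] at this
    rw [MeasureTheory.setIntegral_univ, MeasureTheory.setIntegral_univ] at this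
    rw [this]
    congr 1
    funext x
    exact habs x
  · have := (integrableOn_image_iff_integrableOn_abs_det_fderiv_smul volume
      MeasurableSet.univ hf' hinj (fun y => Real.exp (-(L y)))).1
    rw [himg] at this
    have h2 := this hintφo.integrableOn
    rw [← integrableOn_univ]
    apply h2.congr_fun _ MeasurableSet.univ
    intro x _
    exact habs x


lemma support_line {f : ℝ → ℝ} (hf : ConvexOn ℝ (Ioi 0) f) {m : ℝ} (hm : 0 < m) :
    ∃ c : ℝ, ∀ t ∈ Ioi (0:ℝ), f m + c * (t - m) ≤ f t := by
  set S : Set ℝ := (fun t => slope f m t) '' Ioo 0 m with hS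
  have hmem : slope f m (m/2) ∈ S := ⟨m/2, ⟨by positivity, by linarith⟩, rfl⟩
  have hslope_le : ∀ s ∈ Ioo (0:ℝ) m, ∀ t, m < t → slope f m s ≤ slope f m t := by
    intro s hs t ht
    have h := hf.slope_mono_adjacent (show s ∈ Ioi (0:ℝ) from hs.1)
      (show t ∈ Ioi (0:ℝ) from lt_trans hm ht) hs.2 ht
    rw [slope_comm, slope_def_field, slope_def_field]
    exact h
  have hbdd : BddAbove S := by
    refine ⟨slope f m (m+1), ?_⟩
    rintro a ⟨s, hs, rfl⟩
    exact hslope_le s hs (m+1) (by linarith)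
  set c := sSup S with hc
  refine ⟨c, ?_⟩
  intro t ht
  rcases lt_trichotomy t m with h | h | h
  · -- t < m : slope f m t ∈ S, so slope f m t ≤ c
    have htS : slope f m t ∈ S := ⟨t, ⟨ht, h⟩, rfl⟩
    have h1 : slope f m t ≤ c := le_csSup hbdd htS
    rw [slope_def_field] at h1
    have htm : t - m < 0 := by linarith
    have := mul_le_mul_of_nonpos_right h1 (le_of_lt htm)
    rw [div_mul_cancel₀] at this
    · linarith
    · linarith
  · subst h; simp
  · -- m < t : slope f m t is an upper bound of S
    have h1 : c ≤ slope f m t := csSup_le ⟨_, hmem⟩ (by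
      rintro a ⟨s, hs, rfl⟩
      exact hslope_le s hs t h)
    rw [slope_def_field] at h1
    have htm : (0:ℝ) < t - m := by linarith
    have := mul_le_mul_of_nonneg_right h1 (le_of_lt htm)
    rw [div_mul_cancel₀] at this
    · linarith
    · linarith


lemma int_exp_pos {ψ : E → ℝ} (hcont : Continuous ψ)
    (hint : Integrable (fun x => Real.exp (-(ψ x)))) :
    0 < ∫ x, Real.exp (-(ψ x)) := by
  rw [integral_pos_iff_support_of_nonneg (fun x => (exp_pos _).le) hint]
  have : Function.support (fun x : E => Real.exp (-(ψ x))) = univ := by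
    ext x; simp [Function.mem_support, Real.exp_ne_zero]
  rw [this]
  exact IsOpen.measure_pos volume isOpen_univ ⟨0, trivial⟩


lemma main_convex {f : ℝ → ℝ} {ψ L : E → ℝ}
    (hψ : ContDiff ℝ 2 ψ) (hsc : StrictConvexOn ℝ Set.univ ψ)
    (hL : ∀ y, IsLUB (Set.range fun x => (inner ℝ x y : ℝ) - ψ x) (L y))
    (hdiffeo : Function.Bijective (gradient ψ)) (hLC2 : ContDiff ℝ 2 L)
    (hintφ : Integrable (fun x => Real.exp (-(ψ x))))
    (hintφo : Integrable (fun y => Real.exp (-(L y))))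
    (hintf : Integrable (fun x => Real.exp (-(ψ x)) *
      f (Real.exp (2 * ψ x - (inner ℝ (gradient ψ x) x : ℝ)) * detHess ψ x)))
    (hf : ConvexOn ℝ (Set.Ioi (0 : ℝ)) f) :
    (∫ x, Real.exp (-(ψ x)) *
          f (Real.exp (2 * ψ x - (inner ℝ (gradient ψ x) x : ℝ)) * detHess ψ x))
        ≥ f ((∫ y, Real.exp (-(L y))) / (∫ x, Real.exp (-(ψ x))))
            * ∫ x, Real.exp (-(ψ x)) := by
  have hc : ConvexOn ℝ univ ψ := hsc.convexOn
  have hI : 0 < ∫ x, Real.exp (-(ψ x)) := int_exp_pos (hψ.continuous) hintφ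
  have hIo : 0 < ∫ y, Real.exp (-(L y)) := int_exp_pos (hLC2.continuous) hintφo
  set I := ∫ x, Real.exp (-(ψ x)) with hIdef
  set Io := ∫ y, Real.exp (-(L y)) with hIodef
  set m := Io / I with hm
  have hmpos : 0 < m := div_pos hIo hI
  obtain ⟨c, hcsupp⟩ := support_line hf hmpos
  set g : E → ℝ := fun x => Real.exp (2 * ψ x - (inner ℝ (gradient ψ x) x : ℝ)) * detHess ψ x
    with hg
  have hpos : ∀ x, 0 < LinearMap.det (fderiv ℝ (gradient ψ) x).toLinearMap :=
    fun x => hess_pos hψ hc hL hLC2 x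
  have hgpos : ∀ x, 0 < g x := fun x => mul_pos (exp_pos _) (hpos x)
  obtain ⟨hcov, hcovint⟩ := cov_aux hψ (gradC1 hψ) hdiffeo (L_eval hψ hc hL) hpos hintφo
  -- identity: exp(-ψ x) * g x = exp(ψ x - ⟪x, ∇ψ x⟫) * det
  have hprod : ∀ x : E, Real.exp (-(ψ x)) * g x
      = Real.exp (ψ x - (inner ℝ x (gradient ψ x) : ℝ)) *
          LinearMap.det (fderiv ℝ (gradient ψ) x).toLinearMap := by
    intro x
    rw [hg]
    simp only []
    rw [detHess, ← mul_assoc, ← Real.exp_add]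
    congr 2
    rw [real_inner_comm]
    ring
  have hfeq : (fun x => Real.exp (-(ψ x)) * g x)
      = fun x => Real.exp (ψ x - (inner ℝ x (gradient ψ x) : ℝ)) *
          LinearMap.det (fderiv ℝ (gradient ψ) x).toLinearMap := funext hprod
  have hint2 : Integrable (fun x => Real.exp (-(ψ x)) * g x) := by
    rw [hfeq]; exact hcovint
  have hIog : (∫ x, Real.exp (-(ψ x)) * g x) = Io := by
    rw [hfeq]; exact hcov.symm
  have hle : ∀ x, Real.exp (-(ψ x)) * (f m + c * (g x - m)) ≤ Real.exp (-(ψ x)) * f (g x) :=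
    fun x => mul_le_mul_of_nonneg_left (hcsupp (g x) (hgpos x)) (exp_pos _).le
  have hlhseq : (fun x => Real.exp (-(ψ x)) * (f m + c * (g x - m)))
      = fun x => (f m - c * m) * Real.exp (-(ψ x)) + c * (Real.exp (-(ψ x)) * g x) := by
    funext x; ring
  have hlhsint : Integrable (fun x => Real.exp (-(ψ x)) * (f m + c * (g x - m))) := by
    rw [hlhseq]; exact (hintφ.const_mul _).add (hint2.const_mul c)
  have hlhsval : (∫ x, Real.exp (-(ψ x)) * (f m + c * (g x - m))) = f m * I := by
    rw [hlhseq, integral_add (hintφ.const_mul _) (hint2.const_mul c),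
      MeasureTheory.integral_const_mul, MeasureTheory.integral_const_mul, hIog]
    have hmI : m * I = Io := div_mul_cancel₀ Io hI.ne'
    linear_combination (-c) * hmI
  have hmono := integral_mono hlhsint hintf hle
  rw [hlhsval] at hmono
  exact hmono


end Aux

/-- For `f` convex on `(0,∞)` and `φ = e^{−ψ}` log-concave (`ψ` strictly
convex, `C²`, `∇ψ` a diffeomorphism onto `ℝⁿ`, with dual `φ° = e^{−Lψ}`),
`∫ φ f( e^{⟨∇φ/φ,x⟩} φ^{−2} det Hess(−ln φ) ) dx ≥ f( (∫φ°)/(∫φ) ) ∫ φ dx`;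
if `f` is concave the inequality is reversed. -/
theorem entropy_inequality_logconcave {n : ℕ}
    (f : ℝ → ℝ)
    (ψ L : EuclideanSpace ℝ (Fin n) → ℝ)
    (hψ : ContDiff ℝ 2 ψ) (hsc : StrictConvexOn ℝ Set.univ ψ)
    (hL : ∀ y, IsLUB (Set.range fun x => (inner ℝ x y : ℝ) - ψ x) (L y))
    (hdiffeo : Function.Bijective (gradient ψ)) (hLC2 : ContDiff ℝ 2 L)
    (hintφ : Integrable (fun x => Real.exp (-(ψ x))))
    (hintφo : Integrable (fun y => Real.exp (-(L y))))
    (hintf : Integrable (fun x => Real.exp (-(ψ x)) *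
      f (Real.exp (2 * ψ x - (inner ℝ (gradient ψ x) x : ℝ)) * detHess ψ x))) :
    (ConvexOn ℝ (Set.Ioi (0 : ℝ)) f →
      (∫ x, Real.exp (-(ψ x)) *
          f (Real.exp (2 * ψ x - (inner ℝ (gradient ψ x) x : ℝ)) * detHess ψ x))
        ≥ f ((∫ y, Real.exp (-(L y))) / (∫ x, Real.exp (-(ψ x))))
            * ∫ x, Real.exp (-(ψ x))) ∧
    (ConcaveOn ℝ (Set.Ioi (0 : ℝ)) f →
      (∫ x, Real.exp (-(ψ x)) *
          f (Real.exp (2 * ψ x - (inner ℝ (gradient ψ x) x : ℝ)) * detHess ψ x))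
        ≤ f ((∫ y, Real.exp (-(L y))) / (∫ x, Real.exp (-(ψ x))))
            * ∫ x, Real.exp (-(ψ x))) := by
  constructor
  · intro hf
    exact main_convex hψ hsc hL hdiffeo hLC2 hintφ hintφo hintf hf
  · intro hf
    have hneg : (fun x => Real.exp (-(ψ x)) *
        (-f) (Real.exp (2 * ψ x - (inner ℝ (gradient ψ x) x : ℝ)) * detHess ψ x))
        = fun x => -(Real.exp (-(ψ x)) *
          f (Real.exp (2 * ψ x - (inner ℝ (gradient ψ x) x : ℝ)) * detHess ψ x)) := by
      funext x; simp [mul_neg]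
    have hintf' : Integrable (fun x => Real.exp (-(ψ x)) *
        (-f) (Real.exp (2 * ψ x - (inner ℝ (gradient ψ x) x : ℝ)) * detHess ψ x)) := by
      rw [hneg]; exact hintf.neg
    have h := main_convex hψ hsc hL hdiffeo hLC2 hintφ hintφo hintf' hf.neg
    rw [hneg, integral_neg] at h
    simp only [Pi.neg_apply, neg_mul] at h
    linarith
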